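/- If k is a positive integer divisible by 8, then there is no positive integer n with n = k · z(n), where z is the Fibonacci entry point. -/

import Mathlib

open Nat

/-- Generic: if fib is periodic mod q with period p, fib x mod q only depends on x mod p. -/
lemma fib_mod_per (p q : ℕ) (hp : 0 < p) (h : ∀ x, Nat.fib (x + p) % q = Nat.fib x % q) :
    ∀ x, Nat.fib x % q = Nat.fib (x % p) % q := by
  intro x
  induction x using Nat.strong_induction_on with
  | _ x ih =>
    by_cases hx : x < p
    · rw [Nat.mod_eq_of_lt hx]
    · have hx' : (x - p) + p = x := by omega
      calc Nat.fib x % q = Nat.fib ((x-p)+p) % q := by rw [hx']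
        _ = Nat.fib (x-p) % q := h _
        _ = Nat.fib ((x-p) % p) % q := ih _ (by omega)
        _ = Nat.fib (x % p) % q := by rw [Nat.mod_eq_sub_mod (not_lt.mp hx)]

lemma per8 (x : ℕ) : Nat.fib (x + 12) % 8 = Nat.fib x % 8 := by
  have h := Nat.fib_add x 11
  have : Nat.fib (x + 12) = Nat.fib x * 89 + Nat.fib (x+1) * 144 := by
    rw [show x + 12 = x + 11 + 1 from rfl, h]; norm_num [Nat.fib]
  omega

lemma per16 (x : ℕ) : Nat.fib (x + 24) % 16 = Nat.fib x % 16 := by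
  have h := Nat.fib_add x 23
  have : Nat.fib (x + 24) = Nat.fib x * 28657 + Nat.fib (x+1) * 46368 := by
    rw [show x + 24 = x + 23 + 1 from rfl, h]; norm_num [Nat.fib]
  omega

lemma per2 (x : ℕ) : Nat.fib (x + 3) % 2 = Nat.fib x % 2 := by
  have h := Nat.fib_add x 2
  have : Nat.fib (x + 3) = Nat.fib x * 1 + Nat.fib (x+1) * 2 := by
    rw [show x + 3 = x + 2 + 1 from rfl, h]; norm_num [Nat.fib]
  omega

/-- If 8 divides fib x then 6 divides x. -/
lemma six_dvd_of_eight_dvd_fib {x : ℕ} (h : Nat.fib x % 8 = 0) : x % 6 = 0 := by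
  rw [fib_mod_per 12 8 (by norm_num) per8] at h
  have hr : x % 12 < 12 := Nat.mod_lt _ (by norm_num)
  generalize hq : x % 12 = r at h hr
  interval_cases r <;> first | omega | (exfalso; revert h; decide)

/-- For odd u, fib (6u) ≡ 8 mod 16. -/
lemma fib_six_odd {u : ℕ} (hu : u % 2 = 1) : Nat.fib (6 * u) % 16 = 8 := by
  rw [fib_mod_per 24 16 (by norm_num) per16]
  have : 6 * u % 24 = 6 * (u % 4) := by
    rw [show (24:ℕ) = 6 * 4 from rfl, Nat.mul_mod_mul_left]
  rw [this]
  have : u % 4 = 1 ∨ u % 4 = 3 := by omega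
  rcases this with h | h <;> rw [h] <;> decide

/-- fib is odd off multiples of 3. -/
lemma fib_odd_of_not_three_dvd {x : ℕ} (h : x % 3 = 1) : Nat.fib x % 2 = 1 := by
  rw [fib_mod_per 3 2 (by norm_num) per2, h]; decide

/-- Key valuation lemma: 2^(a+4) does not divide fib (6 · 2^a · u) for odd u. -/
lemma key : ∀ a u : ℕ, u % 2 = 1 → ¬ (2 ^ (a + 4) ∣ Nat.fib (6 * (2 ^ a * u))) := by
  intro a
  induction a with
  | zero =>
    intro u hu h
    simp only [pow_zero, one_mul] at h
    have := fib_six_odd hu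
    have : (16 : ℕ) ∣ Nat.fib (6 * u) := by simpa using h
    omega
  | succ a ih =>
    intro u hu h
    set X := 6 * (2 ^ a * u) with hX
    have h2X : 6 * (2 ^ (a+1) * u) = 2 * X := by ring
    rw [h2X, Nat.fib_two_mul] at h
    -- the second factor is 2 mod 4
    have hdvd : (8 : ℕ) ∣ Nat.fib X := by
      have : Nat.fib 6 ∣ Nat.fib X := Nat.fib_dvd 6 X ⟨2 ^ a * u, rfl⟩
      simpa [show Nat.fib 6 = 8 by decide] using this
    have hodd : Nat.fib (X + 1) % 2 = 1 := by
      apply fib_odd_of_not_three_dvd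
      omega
    have hle : Nat.fib X ≤ 2 * Nat.fib (X + 1) := by
      have := Nat.fib_le_fib_succ (n := X)
      omega
    obtain ⟨b, hb⟩ := hdvd
    have hc : 2 * Nat.fib (X + 1) - Nat.fib X = 2 * (Nat.fib (X+1) - 4 * b) := by omega
    rw [hc] at h
    have hw : (Nat.fib (X+1) - 4 * b) % 2 = 1 := by omega
    -- 2^(a+5) ∣ fib X * (2 * w) with w odd ⇒ 2^(a+4) ∣ fib X
    have h' : 2 ^ (a + 4) ∣ Nat.fib X * (Nat.fib (X+1) - 4 * b) := by
      have := h
      rw [show a + 1 + 4 = (a + 4) + 1 from rfl, pow_succ] at this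
      have h2 : 2 ^ (a+4) * 2 ∣ Nat.fib X * (2 * (Nat.fib (X+1) - 4 * b)) := this
      have : Nat.fib X * (2 * (Nat.fib (X+1) - 4 * b)) =
          (Nat.fib X * (Nat.fib (X+1) - 4 * b)) * 2 := by ring
      rw [this] at h2
      exact (Nat.mul_dvd_mul_iff_right (by norm_num)).mp h2
    have hcop : Nat.Coprime (2 ^ (a+4)) (Nat.fib (X+1) - 4 * b) := by
      apply Nat.Coprime.pow_left
      exact (Nat.prime_two.coprime_iff_not_dvd).mpr (by omega)
    exact ih u hu (hcop.dvd_of_dvd_mul_right h')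

/-- No positive m has 8m ∣ fib m. -/
lemma no_eight_mul (m : ℕ) (hm : 0 < m) : ¬ (8 * m ∣ Nat.fib m) := by
  intro h
  have h8 : Nat.fib m % 8 = 0 := by
    have : (8:ℕ) ∣ Nat.fib m := dvd_trans ⟨m, rfl⟩ h
    omega
  have h6 : m % 6 = 0 := six_dvd_of_eight_dvd_fib h8
  obtain ⟨s, hs⟩ : 6 ∣ m := Nat.dvd_of_mod_eq_zero h6
  have hs0 : s ≠ 0 := by rintro rfl; omega
  obtain ⟨a, u, hu, hsu⟩ := Nat.exists_eq_pow_mul_and_not_dvd hs0 2 (by norm_num)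
  have hu' : u % 2 = 1 := by
    rcases Nat.mod_two_eq_zero_or_one u with h' | h'
    · exact absurd (Nat.dvd_of_mod_eq_zero h') hu
    · exact h'
  apply key a u hu'
  have hmm : m = 6 * (2 ^ a * u) := by rw [hs, hsu]
  rw [← hmm]
  exact dvd_trans ⟨3 * u, by rw [hmm]; ring⟩ h

/-- The Fibonacci entry point: least positive `m` with `n ∣ Nat.fib m`. -/
noncomputable def fibEntry (n : ℕ) : ℕ := sInf {m | 0 < m ∧ n ∣ Nat.fib m}
theorem no_self_fib_divisor_of_eight_dvd (k : ℕ) (hk : 0 < k) (h8 : 8 ∣ k) :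
    ¬ ∃ n : ℕ, 0 < n ∧ n = k * fibEntry n := by
  rintro ⟨n, hn, heq⟩
  by_cases hS : {m | 0 < m ∧ n ∣ Nat.fib m}.Nonempty
  · obtain ⟨hm, hd⟩ := Nat.sInf_mem hS
    set m := fibEntry n with hmdef
    obtain ⟨j, hj⟩ := h8
    have hdvd : 8 * m ∣ Nat.fib m := by
      calc 8 * m ∣ k * m := mul_dvd_mul_right ⟨j, hj⟩ m
        _ = n := heq.symm
        _ ∣ Nat.fib m := hd
    exact no_eight_mul m hm hdvd
  · rw [Set.not_nonempty_iff_eq_empty] at hS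
    have h0 : fibEntry n = 0 := by rw [fibEntry, hS, Nat.sInf_empty]
    rw [h0, Nat.mul_zero] at heq
    omega
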